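/- Consider the projected gradient (PG) algorithm: given x₁ ∈ X and stepsizes γ₁, …, γ_N with 0 < γ_k ≤ 2α/L for all k and γ_k < 2α/L for at least one k, iteratively define x_{k+1} as a minimizer over u ∈ X of ⟨∇f(x_k), u⟩ + (1/γ_k)V(u, x_k) + h(u) (each step satisfying its first-order optimality condition with some p_k ∈ ∂h(x_{k+1})), and set g_{X,k} = (x_k − x_{k+1})/γ_k. Let R ∈ {1, …, N} attain the minimum of ‖g_{X,k}‖ over k = 1, …, N. Then ‖g_{X,R}‖² ≤ L·D_Ψ² / Σ_{k=1}^N (αγ_k − Lγ_k²/2), where D_Ψ = ((Ψ(x₁) − Ψ*)/L)^{1/2}. -/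

import Mathlib

open RealInnerProductSpace


lemma descent_lemma {E : Type*} [NormedAddCommGroup E] [InnerProductSpace ℝ E] [CompleteSpace E]
    {X : Set E} (hXcv : Convex ℝ X) {f : E → ℝ} {f' : E → E}
    (hf' : ∀ x ∈ X, HasGradientAt f (f' x) x)
    {L : ℝ} (hL : 0 < L) (hLip : ∀ x ∈ X, ∀ y ∈ X, ‖f' y - f' x‖ ≤ L * ‖y - x‖)
    {x y : E} (hx : x ∈ X) (hy : y ∈ X) :
    f y ≤ f x + ⟪f' x, y - x⟫ + L / 2 * ‖y - x‖ ^ 2 := by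
  set Δ := y - x with hΔ
  set c : ℝ → E := fun t => x + t • Δ with hc
  have hcX : ∀ t ∈ Set.Icc (0:ℝ) 1, c t ∈ X := by
    intro t ht
    have := hXcv hx hy (by linarith [ht.1, ht.2] : (0:ℝ) ≤ 1 - t) ht.1 (by ring)
    convert this using 1
    simp [hc, hΔ]
    module
  have hderiv : ∀ t ∈ Set.Icc (0:ℝ) 1, HasDerivAt (fun s => f (c s)) ⟪f' (c t), Δ⟫ t := by
    intro t ht
    have hcd : HasDerivAt c Δ t := by
      simpa [hc] using ((hasDerivAt_id t).smul_const Δ).const_add x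
    have hfd := (hf' _ (hcX t ht)).hasFDerivAt
    have := hfd.comp_hasDerivAt t hcd
    simp [InnerProductSpace.toDual] at this
    exact this
  set φ : ℝ → ℝ := fun t => f (c t) - t * ⟪f' x, Δ⟫ - L * ‖Δ‖ ^ 2 * t ^ 2 / 2 with hφ
  have hφd : ∀ t ∈ Set.Icc (0:ℝ) 1,
      HasDerivAt φ (⟪f' (c t) - f' x, Δ⟫ - L * ‖Δ‖ ^ 2 * t) t := by
    intro t ht
    have h1 := (hderiv t ht).sub ((hasDerivAt_id t).mul_const ⟪f' x, Δ⟫)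
    have h2 : HasDerivAt (fun s : ℝ => L * ‖Δ‖ ^ 2 * s ^ 2 / 2) (L * ‖Δ‖ ^ 2 * t) t := by
      have := ((hasDerivAt_pow 2 t).const_mul (L * ‖Δ‖ ^ 2)).div_const 2
      refine this.congr_deriv ?_
      ring
    have := h1.sub h2
    refine this.congr_deriv ?_
    rw [inner_sub_left]
    ring
  have hmono : AntitoneOn φ (Set.Icc 0 1) := by
    apply antitoneOn_of_hasDerivWithinAt_nonpos (convex_Icc 0 1)
    · exact fun t ht => ((hφd t ht).continuousAt).continuousWithinAt
    · intro t ht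
      rw [interior_Icc] at ht
      exact (hφd t (Set.mem_Icc_of_Ioo ht)).hasDerivWithinAt
    · intro t ht
      rw [interior_Icc] at ht
      have ht' : t ∈ Set.Icc (0:ℝ) 1 := Set.mem_Icc_of_Ioo ht
      have h1 : ⟪f' (c t) - f' x, Δ⟫ ≤ ‖f' (c t) - f' x‖ * ‖Δ‖ := real_inner_le_norm _ _
      have h2 : ‖f' (c t) - f' x‖ ≤ L * ‖c t - x‖ := hLip x hx _ (hcX t ht')
      have h3 : ‖c t - x‖ = t * ‖Δ‖ := by
        simp [hc, norm_smul, abs_of_nonneg ht'.1]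
      rw [h3] at h2
      have h4 := mul_le_mul_of_nonneg_right h2 (norm_nonneg Δ)
      nlinarith [h1, h4]
  have := hmono (Set.left_mem_Icc.2 zero_le_one) (Set.right_mem_Icc.2 zero_le_one) zero_le_one
  simp only [hφ, hc] at this
  simp only [one_smul, zero_smul, add_zero] at this
  rw [show x + Δ = y by simp [hΔ]] at this
  nlinarith [this]

lemma telescope (F : ℕ → ℝ) (n : ℕ) :
    ∑ k ∈ Finset.Icc 1 n, (F k - F (k + 1)) = F 1 - F (n + 1) := by
  induction n with
  | zero => simp
  | succ m ih =>
    rw [Finset.sum_Icc_succ_top (by omega), ih]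
    ring

/-- Theorem 3.1: convergence of the projected gradient (PG) algorithm. If
`0 < γ_k ≤ 2α/L` for all `k` and `γ_k < 2α/L` for at least one `k`, and `R`
minimizes `‖g_{X,k}‖` over `k = 1, …, N`, then
`‖g_{X,R}‖² ≤ L D_Ψ² / Σ_{k=1}^N (αγ_k - Lγ_k²/2)` where `D_Ψ² = (Ψ(x₁) - Ψ*)/L`. -/
theorem projected_gradient_algorithm_convergence
    {E : Type*} [NormedAddCommGroup E] [InnerProductSpace ℝ E] [FiniteDimensional ℝ E]
    (X : Set E) (hXne : X.Nonempty) (hXcl : IsClosed X) (hXcv : Convex ℝ X)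
    (h : E → ℝ) (hh : ConvexOn ℝ X h)
    (w : E → ℝ) (gw : E → E) (hgw : ∀ x ∈ X, HasGradientAt w (gw x) x)
    (α : ℝ) (hα : 0 < α)
    (hsc : ∀ x ∈ X, ∀ z ∈ X, α * ‖x - z‖ ^ 2 ≤ ⟪x - z, gw x - gw z⟫)
    (f : E → ℝ) (f' : E → E) (hf' : ∀ x ∈ X, HasGradientAt f (f' x) x)
    (L : ℝ) (hL : 0 < L)
    (hLip : ∀ x ∈ X, ∀ y ∈ X, ‖f' y - f' x‖ ≤ L * ‖y - x‖)
    -- Ψ* = inf_{x ∈ X} (f + h)(x) is finite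
    (Ψstar : ℝ) (hΨstar : IsGLB ((fun z => f z + h z) '' X) Ψstar)
    (N : ℕ) (hN : 1 ≤ N)
    (γ : ℕ → ℝ)
    (hγpos : ∀ k ∈ Finset.Icc 1 N, 0 < γ k)
    (hγub : ∀ k ∈ Finset.Icc 1 N, γ k ≤ 2 * α / L)
    (hγstrict : ∃ k ∈ Finset.Icc 1 N, γ k < 2 * α / L)
    (x : ℕ → E) (hx1 : x 1 ∈ X)
    (hxX : ∀ k ∈ Finset.Icc 1 N, x (k + 1) ∈ X)
    -- x_{k+1} is a minimizer over u ∈ X of ⟨∇f(x_k), u⟩ + (1/γ_k) V(u, x_k) + h(u)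
    (hmin : ∀ k ∈ Finset.Icc 1 N, ∀ u ∈ X,
      ⟪f' (x k), x (k + 1)⟫
          + (1 / γ k) * (w (x (k + 1)) - w (x k) - ⟪gw (x k), x (k + 1) - x k⟫)
          + h (x (k + 1)) ≤
        ⟪f' (x k), u⟫ + (1 / γ k) * (w u - w (x k) - ⟪gw (x k), u - x k⟫) + h u)
    (hopt : ∀ k ∈ Finset.Icc 1 N, ∃ p : E,
      (∀ u ∈ X, h (x (k + 1)) + ⟪p, u - x (k + 1)⟫ ≤ h u) ∧
      (∀ u ∈ X, 0 ≤ ⟪f' (x k) + (1 / γ k) • (gw (x (k + 1)) - gw (x k)) + p, u - x (k + 1)⟫))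
    -- g_{X,k} = (x_k - x_{k+1})/γ_k, and R attains the minimum of ‖g_{X,k}‖
    (R : ℕ) (hR : R ∈ Finset.Icc 1 N)
    (hRmin : ∀ k ∈ Finset.Icc 1 N,
      ‖(1 / γ R) • (x R - x (R + 1))‖ ≤ ‖(1 / γ k) • (x k - x (k + 1))‖) :
    ‖(1 / γ R) • (x R - x (R + 1))‖ ^ 2 ≤
      L * ((f (x 1) + h (x 1) - Ψstar) / L)
        / ∑ k ∈ Finset.Icc 1 N, (α * γ k - L * γ k ^ 2 / 2) := by
  -- membership of all iterates
  have hxmem : ∀ k ∈ Finset.Icc 1 N, x k ∈ X := by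
    intro k hk
    rw [Finset.mem_Icc] at hk
    rcases Nat.eq_or_lt_of_le hk.1 with h1 | h1
    · rwa [← h1]
    · obtain ⟨m, rfl⟩ := Nat.exists_eq_add_of_lt h1
      exact hxX (1 + m) (Finset.mem_Icc.2 ⟨Nat.le_add_right 1 m, by omega⟩)
  -- per-step estimate
  have key : ∀ k ∈ Finset.Icc 1 N,
      (α * γ k - L * γ k ^ 2 / 2) * ‖(1 / γ k) • (x k - x (k + 1))‖ ^ 2 ≤
        (f (x k) + h (x k)) - (f (x (k + 1)) + h (x (k + 1))) := by
    intro k hk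
    have hγ := hγpos k hk
    have hxk := hxmem k hk
    have hxk1 := hxX k hk
    obtain ⟨p, hsub, hfoc⟩ := hopt k hk
    have hfoc' := hfoc (x k) hxk
    rw [inner_add_left, inner_add_left, real_inner_smul_left] at hfoc'
    have hsck := hsc (x (k+1)) hxk1 (x k) hxk
    have hinner : ⟪gw (x (k+1)) - gw (x k), x k - x (k+1)⟫
        = -⟪x (k+1) - x k, gw (x (k+1)) - gw (x k)⟫ := by
      rw [real_inner_comm, ← inner_neg_left]
      congr 1
      abel
    have hsubk := hsub (x k) hxk
    have hdesc := descent_lemma hXcv hf' hL hLip hxk hxk1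
    have hnorm : ‖(1 / γ k) • (x k - x (k + 1))‖ ^ 2
        = (1 / γ k)^2 * ‖x (k+1) - x k‖ ^ 2 := by
      rw [norm_smul, mul_pow]
      congr 1
      · rw [Real.norm_eq_abs, sq_abs]
      · rw [← norm_neg]
        congr 1
        abel
    rw [hnorm]
    have hf1 : ⟪f' (x k), x (k+1) - x k⟫
        ≤ (1 / γ k) * ⟪gw (x (k+1)) - gw (x k), x k - x (k+1)⟫ + ⟪p, x k - x (k+1)⟫ := by
      have : ⟪f' (x k), x k - x (k+1)⟫ = -⟪f' (x k), x (k+1) - x k⟫ := by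
        rw [← inner_neg_right]; congr 1; abel
      linarith [hfoc']
    have hf2 : (1 / γ k) * ⟪gw (x (k+1)) - gw (x k), x k - x (k+1)⟫
        ≤ -(α / γ k) * ‖x (k+1) - x k‖ ^ 2 := by
      rw [hinner]
      have h0 : (0:ℝ) < 1 / γ k := by positivity
      have := mul_le_mul_of_nonneg_left hsck h0.le
      have heq : -(α / γ k) * ‖x (k+1) - x k‖ ^ 2 = -(1/γ k * (α * ‖x (k+1) - x k‖ ^ 2)) := by
        field_simp
      rw [heq]
      linarith
    have hf3 : ⟪p, x k - x (k+1)⟫ ≤ h (x k) - h (x (k+1)) := by linarith [hsubk]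
    have hcoef : (α * γ k - L * γ k ^ 2 / 2) * ((1 / γ k)^2 * ‖x (k+1) - x k‖ ^ 2)
        = (α / γ k - L / 2) * ‖x (k+1) - x k‖ ^ 2 := by
      field_simp
    rw [hcoef]
    nlinarith [hdesc, hf1, hf2, hf3]
  -- coefficients are nonneg
  have hcnn : ∀ k ∈ Finset.Icc 1 N, 0 ≤ α * γ k - L * γ k ^ 2 / 2 := by
    intro k hk
    have h1 := hγpos k hk
    have h2 := hγub k hk
    have h3 : γ k * L ≤ 2 * α := (le_div_iff₀ hL).mp h2
    nlinarith
  -- S > 0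
  obtain ⟨k₀, hk₀, hk₀lt⟩ := hγstrict
  have hS : 0 < ∑ k ∈ Finset.Icc 1 N, (α * γ k - L * γ k ^ 2 / 2) := by
    apply Finset.sum_pos' hcnn
    refine ⟨k₀, hk₀, ?_⟩
    have h1 := hγpos k₀ hk₀
    have : γ k₀ * L < 2 * α := by
      rw [lt_div_iff₀ hL] at hk₀lt
      linarith
    nlinarith
  -- telescoping sum
  have htel : ∑ k ∈ Finset.Icc 1 N,
      ((f (x k) + h (x k)) - (f (x (k + 1)) + h (x (k + 1))))
      = (f (x 1) + h (x 1)) - (f (x (N + 1)) + h (x (N + 1))) := by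
    exact telescope (fun k => f (x k) + h (x k)) N
  have hΨlb : Ψstar ≤ f (x (N + 1)) + h (x (N + 1)) := by
    exact hΨstar.1 ⟨x (N + 1), hxX N (Finset.mem_Icc.2 ⟨hN, le_refl N⟩), rfl⟩
  have hsum : ∑ k ∈ Finset.Icc 1 N,
      (α * γ k - L * γ k ^ 2 / 2) * ‖(1 / γ k) • (x k - x (k + 1))‖ ^ 2
      ≤ f (x 1) + h (x 1) - Ψstar := by
    calc _ ≤ ∑ k ∈ Finset.Icc 1 N,
        ((f (x k) + h (x k)) - (f (x (k + 1)) + h (x (k + 1)))) :=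
          Finset.sum_le_sum key
      _ = (f (x 1) + h (x 1)) - (f (x (N + 1)) + h (x (N + 1))) := htel
      _ ≤ f (x 1) + h (x 1) - Ψstar := by linarith
  have hRsum : ‖(1 / γ R) • (x R - x (R + 1))‖ ^ 2
        * ∑ k ∈ Finset.Icc 1 N, (α * γ k - L * γ k ^ 2 / 2)
      ≤ f (x 1) + h (x 1) - Ψstar := by
    calc ‖(1 / γ R) • (x R - x (R + 1))‖ ^ 2
          * ∑ k ∈ Finset.Icc 1 N, (α * γ k - L * γ k ^ 2 / 2)
        = ∑ k ∈ Finset.Icc 1 N,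
            (α * γ k - L * γ k ^ 2 / 2) * ‖(1 / γ R) • (x R - x (R + 1))‖ ^ 2 := by
          rw [Finset.mul_sum]
          exact Finset.sum_congr rfl fun k _ => by ring
      _ ≤ ∑ k ∈ Finset.Icc 1 N,
            (α * γ k - L * γ k ^ 2 / 2) * ‖(1 / γ k) • (x k - x (k + 1))‖ ^ 2 := by
          apply Finset.sum_le_sum
          intro k hk
          exact mul_le_mul_of_nonneg_left
            (pow_le_pow_left₀ (norm_nonneg _) (hRmin k hk) 2) (hcnn k hk)
      _ ≤ f (x 1) + h (x 1) - Ψstar := hsum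
  have hLcancel : L * ((f (x 1) + h (x 1) - Ψstar) / L) = f (x 1) + h (x 1) - Ψstar := by
    field_simp
  rw [hLcancel, le_div_iff₀ hS]
  exact hRsum
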